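/- The net graph is not narrow: in the net, there is a vertex at distance 2 from a longest shortest path. -/

import Mathlib

open SimpleGraph

/-- `σ` is a proper interval ordering of `G`: whenever `σ u < σ v < σ w` and
`{u,w}` is an edge, both `{u,v}` and `{v,w}` are edges. -/
def IsPIO {V : Type*} {n : ℕ} (G : SimpleGraph V) (σ : V ≃ Fin n) : Prop :=
  ∀ u v w : V, σ u < σ v → σ v < σ w → G.Adj u w → G.Adj u v ∧ G.Adj v w

/-- `G` admits a proper interval ordering. -/
def HasPIO {V : Type*} [Fintype V] (G : SimpleGraph V) : Prop :=
  ∃ σ : V ≃ Fin (Fintype.card V), IsPIO G σ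

/-- Chordal: no induced cycle of length ≥ 4. -/
def Chordal {V : Type*} (G : SimpleGraph V) : Prop :=
  ∀ n : ℕ, 4 ≤ n → IsEmpty (cycleGraph n ↪g G)

/-- The claw `K_{1,3}`. -/
def clawGraph : SimpleGraph (Fin 4) :=
  fromEdgeSet {s(0,1), s(0,2), s(0,3)}

/-- The net: a triangle `0,1,2` with pendant vertices `3,4,5`. -/
def netGraph : SimpleGraph (Fin 6) :=
  fromEdgeSet {s(0,1), s(1,2), s(0,2), s(0,3), s(1,4), s(2,5)}

/-- The tent (3-sun): inner triangle `0,1,2`, outer vertices `3,4,5`. -/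
def tentGraph : SimpleGraph (Fin 6) :=
  fromEdgeSet {s(0,1), s(1,2), s(0,2), s(3,0), s(3,1), s(4,1), s(4,2), s(5,2), s(5,0)}

/-- A longest shortest path: a shortest path between two vertices at maximal distance. -/
def IsLongestShortestPath {V : Type*} (G : SimpleGraph V) {u w : V} (p : G.Walk u w) : Prop :=
  p.IsPath ∧ p.length = G.dist u w ∧ ∀ a b : V, G.dist a b ≤ G.dist u w

/-- Narrow: every vertex lies on, or is adjacent to a vertex of, every longest shortest path. -/
def Narrow {V : Type*} (G : SimpleGraph V) : Prop :=
  ∀ (v u w : V) (p : G.Walk u w), IsLongestShortestPath G p →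
    v ∈ p.support ∨ ∃ x ∈ p.support, G.Adj v x

instance : DecidableRel netGraph.Adj := fun u v =>
  decidable_of_iff ((s(u,v) = s(0,1) ∨ s(u,v) = s(1,2) ∨ s(u,v) = s(0,2) ∨
      s(u,v) = s(0,3) ∨ s(u,v) = s(1,4) ∨ s(u,v) = s(2,5)) ∧ u ≠ v) (by
    rw [netGraph, fromEdgeSet_adj]; simp [Set.mem_insert_iff])

lemma net_reach0 : ∀ a : Fin 6, netGraph.Reachable 0 a := by
  intro a
  fin_cases a
  · exact Walk.reachable .nil
  · exact Walk.reachable (.cons (show netGraph.Adj 0 1 by decide) .nil)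
  · exact Walk.reachable (.cons (show netGraph.Adj 0 2 by decide) .nil)
  · exact Walk.reachable (.cons (show netGraph.Adj 0 3 by decide) .nil)
  · exact Walk.reachable (.cons (show netGraph.Adj 0 1 by decide)
      (.cons (show netGraph.Adj 1 4 by decide) .nil))
  · exact Walk.reachable (.cons (show netGraph.Adj 0 2 by decide)
      (.cons (show netGraph.Adj 2 5 by decide) .nil))

lemma net_conn : netGraph.Connected :=
  ⟨fun a b => (net_reach0 a).symm.trans (net_reach0 b)⟩

lemma net_dist_le_one {u v : Fin 6} (h : netGraph.Adj u v) : netGraph.dist u v ≤ 1 :=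
  le_of_eq (dist_eq_one_iff_adj.mpr h)

def netF : Fin 6 → Fin 6
  | 0 => 0 | 1 => 1 | 2 => 2 | 3 => 0 | 4 => 1 | 5 => 2

lemma net_diam : ∀ a b : Fin 6, netGraph.dist a b ≤ 3 := by
  let f := netF
  have h1 : ∀ a : Fin 6, netGraph.dist a (f a) ≤ 1 := by
    intro a
    fin_cases a <;>
      first
      | exact net_dist_le_one (by decide)
      | simp [f, netF, SimpleGraph.dist_self]
  have h2 : ∀ a b : Fin 6, netGraph.dist (f a) (f b) ≤ 1 := by
    intro a b
    fin_cases a <;> fin_cases b <;>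
      first
      | exact net_dist_le_one (by decide)
      | simp [f, netF, SimpleGraph.dist_self]
  intro a b
  calc netGraph.dist a b ≤ netGraph.dist a (f a) + netGraph.dist (f a) b :=
        net_conn.dist_triangle
    _ ≤ netGraph.dist a (f a) + (netGraph.dist (f a) (f b) + netGraph.dist (f b) b) :=
        add_le_add_right net_conn.dist_triangle _
    _ ≤ 1 + (1 + 1) :=
        add_le_add (h1 a) (add_le_add (h2 a b) (SimpleGraph.dist_comm ▸ h1 b))
    _ = 3 := rfl

lemma net_ge_two {u v : Fin 6} (hne : u ≠ v) (hadj : ¬ netGraph.Adj u v) :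
    2 ≤ netGraph.dist u v := by
  have h0 : netGraph.dist u v ≠ 0 := Nat.pos_iff_ne_zero.mp (net_conn.pos_dist_of_ne hne)
  have h1 : netGraph.dist u v ≠ 1 := fun h => hadj (dist_eq_one_iff_adj.mp h)
  omega

lemma net_ge_three {u v : Fin 6} (hne : u ≠ v) (hadj : ¬ netGraph.Adj u v)
    (hmid : ∀ x : Fin 6, ¬ (netGraph.Adj u x ∧ netGraph.Adj x v)) :
    3 ≤ netGraph.dist u v := by
  have h2 := net_ge_two hne hadj
  rcases Nat.lt_or_ge (netGraph.dist u v) 3 with h | h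
  · exfalso
    have hd : netGraph.dist u v = 2 := by omega
    obtain ⟨p, hp⟩ := (net_conn u v).exists_walk_length_eq_dist
    rw [hd] at hp
    cases p with
    | nil => simp at hp
    | cons ha q =>
      cases q with
      | nil => simp at hp
      | cons hb q' =>
        cases q' with
        | nil => exact hmid _ ⟨ha, hb⟩
        | cons hc q'' => simp [Walk.length_cons] at hp
  · exact h

theorem netGraph_not_narrow :
    ∃ (v u w : Fin 6) (p : netGraph.Walk u w), IsLongestShortestPath netGraph p ∧
      (∀ x ∈ p.support, 2 ≤ netGraph.dist v x) ∧ (∃ x ∈ p.support, netGraph.dist v x = 2) := by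
  refine ⟨5, 3, 4,
    .cons (show netGraph.Adj 3 0 by decide)
      (.cons (show netGraph.Adj 0 1 by decide)
        (.cons (show netGraph.Adj 1 4 by decide) .nil)), ?_, ?_, ?_⟩
  · have hd : netGraph.dist 3 4 = 3 := by
      have hle := netGraph.dist_le
        (Walk.cons (show netGraph.Adj 3 0 by decide)
          (.cons (show netGraph.Adj 0 1 by decide)
            (.cons (show netGraph.Adj 1 4 by decide) .nil)))
      simp [Walk.length_cons] at hle
      have hge := net_ge_three (u := 3) (v := 4) (by decide) (by decide) (by decide)
      omega
    refine ⟨?_, ?_, ?_⟩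
    · rw [Walk.isPath_def]
      simp [Walk.support_cons]
    · simp [Walk.length_cons, hd]
    · intro a b; rw [hd]; exact net_diam a b
  · intro x hx
    simp [Walk.support_cons] at hx
    rcases hx with rfl | rfl | rfl | rfl <;> exact net_ge_two (by decide) (by decide)
  · refine ⟨0, by simp [Walk.support_cons], ?_⟩
    have hle := netGraph.dist_le
      (Walk.cons (show netGraph.Adj 5 2 by decide)
        (.cons (show netGraph.Adj 2 0 by decide) .nil))
    simp [Walk.length_cons] at hle
    have := net_ge_two (u := 5) (v := 0) (by decide) (by decide)
    omega
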